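/- Let H : R^{2n} → R^{2n} be a locally Lipschitz vector field with H(-x) = -H(x) for all x. Let x : R → R^{2n} be a τ-periodic solution of ẋ = H(x) with minimal period τ > 0, and suppose there exist s₁, s₂ ∈ R with x(s₁) = -x(s₂). Then x(t + τ/2) = -x(t) for all t ∈ R. -/

import Mathlib

open Set Filter Topology

/-- Global uniqueness of solutions of an autonomous ODE with locally Lipschitz RHS. -/
lemma ode_uniq {E : Type*} [NormedAddCommGroup E] [NormedSpace ℝ E]
    {H : E → E} (hLip : LocallyLipschitz H) {x y : ℝ → E}
    (hx : ∀ t, HasDerivAt x (H (x t)) t) (hy : ∀ t, HasDerivAt y (H (y t)) t)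
    {t₀ : ℝ} (h0 : x t₀ = y t₀) : ∀ t, x t = y t := by
  have hS : IsClopen {t : ℝ | x t = y t} := by
    constructor
    · exact isClosed_eq (continuous_iff_continuousAt.mpr fun t ↦ (hx t).continuousAt)
        (continuous_iff_continuousAt.mpr fun t ↦ (hy t).continuousAt)
    · rw [isOpen_iff_mem_nhds]
      intro t₁ ht₁
      obtain ⟨K, s, hs, hK⟩ := hLip (x t₁)
      have hys : s ∈ 𝓝 (y t₁) := by rwa [← ht₁]
      have hfx : ∀ᶠ t in 𝓝 t₁, HasDerivAt x (H (x t)) t ∧ x t ∈ s :=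
        Filter.eventually_of_mem ((hx t₁).continuousAt.preimage_mem_nhds hs)
          fun t ht ↦ ⟨hx t, ht⟩
      have hfy : ∀ᶠ t in 𝓝 t₁, HasDerivAt y (H (y t)) t ∧ y t ∈ s :=
        Filter.eventually_of_mem ((hy t₁).continuousAt.preimage_mem_nhds hys)
          fun t ht ↦ ⟨hy t, ht⟩
      have := ODE_solution_unique_of_eventually
        (v := fun _ ↦ H) (s := fun _ ↦ s) (K := K) (Filter.Eventually.of_forall fun _ ↦ hK) hfx hfy ht₁
      exact this.mono fun t ht ↦ ht
  intro t
  have : {t : ℝ | x t = y t} = univ := hS.eq_univ ⟨t₀, h0⟩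
  exact (this ▸ (mem_univ t) : t ∈ {t : ℝ | x t = y t})

theorem antisymmetric_of_orbit_meets_neg_orbit {n : ℕ}
    (H : EuclideanSpace ℝ (Fin (2 * n)) → EuclideanSpace ℝ (Fin (2 * n)))
    (hLip : LocallyLipschitz H) (hodd : ∀ x, H (-x) = -H x)
    (x : ℝ → EuclideanSpace ℝ (Fin (2 * n)))
    (hx : ∀ t, HasDerivAt x (H (x t)) t)
    (τ : ℝ) (hτ : 0 < τ) (hper : Function.Periodic x τ)
    (hmin : ∀ T, 0 < T → Function.Periodic x T → τ ≤ T)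
    (s₁ s₂ : ℝ) (hmeet : x s₁ = -x s₂) :
    ∀ t, x (t + τ / 2) = -x t := by
  set c : ℝ := s₂ - s₁ with hc
  -- y t = -x (t + c) is a solution agreeing with x at s₁
  have hy : ∀ t, HasDerivAt (fun t ↦ -x (t + c)) (H (-x (t + c))) t := by
    intro t
    have h1 : HasDerivAt (fun t ↦ x (t + c)) (H (x (t + c))) t :=
      HasDerivAt.comp_add_const t c (hx (t + c))
    rw [hodd]; exact h1.neg
  have h0 : x s₁ = -x (s₁ + c) := by
    rw [hc]; rw [show s₁ + (s₂ - s₁) = s₂ by ring]; exact hmeet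
  have key : ∀ t, x t = -x (t + c) := ode_uniq hLip hx hy h0
  -- 2c is a period
  have hper2 : Function.Periodic x (2 * c) := by
    intro t
    have h1 := key t
    have h2 := key (t + c)
    rw [h2] at h1
    rw [neg_neg] at h1
    rw [show t + 2 * c = t + c + c by ring]
    exact h1.symm
  -- any period is an integer multiple of τ
  have hint : ∃ k : ℤ, 2 * c = k * τ := by
    set k : ℤ := ⌊(2 * c) / τ⌋ with hk
    have hr : Function.Periodic x (2 * c - k * τ) := by
      intro t
      rw [show t + (2 * c - k * τ) = t + 2 * c - k * τ by ring,
        hper.sub_int_mul_eq, hper2 t]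
    have hr0 : (0 : ℝ) ≤ 2 * c - k * τ := by
      have := Int.sub_floor_div_mul_nonneg (2 * c) hτ
      simpa [hk] using this
    have hr1 : 2 * c - k * τ < τ := by
      have := Int.sub_floor_div_mul_lt (2 * c) hτ
      simpa [hk] using this
    rcases eq_or_lt_of_le hr0 with h | h
    · exact ⟨k, by linarith⟩
    · exact absurd (hmin _ h hr) (by linarith)
  obtain ⟨k, hk⟩ := hint
  rcases Int.even_or_odd k with ⟨m, hm⟩ | ⟨m, hm⟩
  · -- c = m τ is a period, so x t = -x t, so x ≡ 0
    have hcm : c = m * τ := by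
      have : (2 : ℝ) * c = (m + m) * τ := by
        rw [hk, hm]; push_cast; ring
      linarith
    have hzero : ∀ t, x t = 0 := by
      intro t
      have h1 := key t
      have h2 : x (t + c) = x t := by
        rw [hcm, show t + (m : ℝ) * τ = t + m * τ by ring]
        exact hper.int_mul m t
      rw [h2] at h1
      have h3 : (2 : ℝ) • x t = 0 := by
        rw [two_smul ℝ]; nth_rewrite 1 [h1]; exact neg_add_cancel _
      rcases smul_eq_zero.mp h3 with h | h
      · norm_num at h
      · exact h
    intro t; rw [hzero, hzero, neg_zero]
  · -- k = 2m+1 : c = m τ + τ/2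
    have hcm : c = m * τ + τ / 2 := by
      have : (2 : ℝ) * c = (2 * m + 1) * τ := by
        rw [hk, hm]; push_cast; ring
      linarith
    intro t
    have h1 := key (t - m * τ)
    have h2 : x (t - m * τ) = x t := hper.sub_int_mul_eq m
    rw [h2] at h1
    rw [show t - (m : ℝ) * τ + c = t + τ / 2 by rw [hcm]; ring] at h1
    rw [h1, neg_neg]
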